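/- Let X be any real N×N matrix (possibly non-symmetric) with XXᵀ positive definite, and let UΛUᵀ be the eigendecomposition of XXᵀ (U orthogonal, Λ diagonal positive). If 0 < μ < λ_min(Λ^{-1/2}Uᵀ(X + Xᵀ)UΛ^{-1/2}), then ‖I − μX‖₂ < 1. -/

import Mathlib

open Matrix

section Aux

lemma posDef_conj_aux {n : Type*} [Fintype n] [DecidableEq n] {A B : Matrix n n ℝ}
    (hA : A.PosDef) (hB : IsUnit B) : (Bᴴ * A * B).PosDef := by
  refine Matrix.PosDef.of_dotProduct_mulVec_pos ?_ ?_
  · exact isHermitian_conjTranspose_mul_mul B hA.1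
  · intro x hx
    have hinj := Matrix.mulVec_injective_iff_isUnit.mpr hB
    have hBx : B *ᵥ x ≠ 0 := by
      intro h
      apply hx
      apply hinj
      rw [h, Matrix.mulVec_zero]
    simpa only [star_mulVec, dotProduct_mulVec, vecMul_vecMul] using hA.dotProduct_mulVec_pos hBx

lemma posDef_smul_aux {n : Type*} [Fintype n] [DecidableEq n] {A : Matrix n n ℝ}
    (hA : A.PosDef) {c : ℝ} (hc : 0 < c) : (c • A).PosDef := by
  refine Matrix.PosDef.of_dotProduct_mulVec_pos ?_ ?_
  · unfold Matrix.IsHermitian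
    rw [conjTranspose_smul, hA.1.eq, star_trivial]
  · intro x hx
    rw [smul_mulVec, dotProduct_smul, smul_eq_mul]
    exact mul_pos hc (hA.dotProduct_mulVec_pos hx)

lemma dot_eq_inner_aux {N : ℕ} (u v : EuclideanSpace ℝ (Fin N)) :
    (WithLp.equiv 2 (Fin N → ℝ) u) ⬝ᵥ (WithLp.equiv 2 (Fin N → ℝ) v) = inner ℝ u v := by
  simp [PiLp.inner_apply, dotProduct, mul_comm]

end Aux

/-- Spectral (ℓ2 operator) norm of a real square matrix. -/
noncomputable def specNorm {N : ℕ} (A : Matrix (Fin N) (Fin N) ℝ) : ℝ :=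
  ‖Matrix.toEuclideanCLM (𝕜 := ℝ) A‖

section Aux2

lemma norm_apply_lt_one_aux {N : ℕ} {B : Matrix (Fin N) (Fin N) ℝ}
    (h : ((1 : Matrix (Fin N) (Fin N) ℝ) - Bᵀ * B).PosDef)
    (v : EuclideanSpace ℝ (Fin N)) (hv : ‖v‖ = 1) :
    ‖Matrix.toEuclideanCLM (𝕜 := ℝ) B v‖ < 1 := by
  set T := Matrix.toEuclideanCLM (𝕜 := ℝ) B
  set x : Fin N → ℝ := WithLp.equiv 2 (Fin N → ℝ) v with hxdef
  have hvne : v ≠ 0 := by intro h0; rw [h0, norm_zero] at hv; norm_num at hv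
  have hxne : x ≠ 0 := by
    intro h0
    exact hvne ((WithLp.equiv 2 (Fin N → ℝ)).injective (by rw [← hxdef, h0]; simp))
  have hpos := h.dotProduct_mulVec_pos hxne
  have hTv : T v = (WithLp.equiv 2 (Fin N → ℝ)).symm (B *ᵥ x) := by
    have := Matrix.toEuclideanCLM_toLp (𝕜 := ℝ) B x
    simpa [hxdef, Matrix.toLin'_apply] using this
  have hBx : (B *ᵥ x) ⬝ᵥ (B *ᵥ x) = ‖T v‖ ^ 2 := by
    rw [hTv, ← real_inner_self_eq_norm_sq, ← dot_eq_inner_aux, Equiv.apply_symm_apply]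
  have hxx : x ⬝ᵥ x = 1 := by
    have := dot_eq_inner_aux v v
    rw [real_inner_self_eq_norm_sq, hv] at this
    simpa [hxdef] using this
  have hexp : star x ⬝ᵥ (((1 : Matrix (Fin N) (Fin N) ℝ) - Bᵀ * B) *ᵥ x)
      = 1 - ‖T v‖ ^ 2 := by
    rw [sub_mulVec, dotProduct_sub, one_mulVec, star_trivial, hxx]
    rw [← mulVec_mulVec, dotProduct_mulVec, vecMul_transpose, hBx]
  rw [hexp] at hpos
  nlinarith [norm_nonneg (T v)]

lemma specNorm_lt_one_aux {N : ℕ} {B : Matrix (Fin N) (Fin N) ℝ}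
    (h : ((1 : Matrix (Fin N) (Fin N) ℝ) - Bᵀ * B).PosDef) : specNorm B < 1 := by
  set T := Matrix.toEuclideanCLM (𝕜 := ℝ) B with hT
  rcases Nat.eq_zero_or_pos N with hN | hN
  · subst hN
    have : specNorm B ≤ 0 := by
      apply ContinuousLinearMap.opNorm_le_bound _ le_rfl
      intro x
      have : x = 0 := Subsingleton.elim x 0
      simp [this]
    linarith
  · have : Nontrivial (EuclideanSpace ℝ (Fin N)) := by
      have : 0 < Module.finrank ℝ (EuclideanSpace ℝ (Fin N)) := by simp [hN]
      exact Module.nontrivial_of_finrank_pos this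
    obtain ⟨v₀, hv₀mem, hmax⟩ := (isCompact_sphere (0 : EuclideanSpace ℝ (Fin N)) 1).exists_isMaxOn
      (NormedSpace.sphere_nonempty.mpr zero_le_one) (T.continuous.norm.continuousOn)
    have hv₀ : ‖v₀‖ = 1 := mem_sphere_zero_iff_norm.mp hv₀mem
    have hkey : ‖T v₀‖ < 1 := norm_apply_lt_one_aux h v₀ hv₀
    have hle : specNorm B ≤ ‖T v₀‖ := by
      apply ContinuousLinearMap.opNorm_le_bound _ (norm_nonneg _)
      intro x
      rcases eq_or_ne x 0 with rfl | hx
      · simp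
      · have hxn : ‖x‖ ≠ 0 := norm_ne_zero_iff.mpr hx
        have hu : ‖(‖x‖⁻¹ • x)‖ = 1 := by
          rw [norm_smul, norm_inv, norm_norm, inv_mul_cancel₀ hxn]
        have humem : (‖x‖⁻¹ • x) ∈ Metric.sphere (0 : EuclideanSpace ℝ (Fin N)) 1 :=
          mem_sphere_zero_iff_norm.mpr hu
        have h2 : ‖T (‖x‖⁻¹ • x)‖ ≤ ‖T v₀‖ := hmax humem
        rw [T.map_smul, norm_smul, norm_inv, norm_norm] at h2
        calc ‖T x‖ = ‖x‖ * (‖x‖⁻¹ * ‖T x‖) := by field_simp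
          _ ≤ ‖x‖ * ‖T v₀‖ := mul_le_mul_of_nonneg_left h2 (norm_nonneg x)
          _ = ‖T v₀‖ * ‖x‖ := mul_comm _ _
    linarith

set_option synthInstance.maxHeartbeats 1000000 in
lemma specNorm_transpose_aux {N : ℕ} (A : Matrix (Fin N) (Fin N) ℝ) :
    specNorm Aᵀ = specNorm A := by
  unfold specNorm
  rw [show Aᵀ = star A from by
    rw [star_eq_conjTranspose, conjTranspose_eq_transpose_of_trivial], map_star,
    ContinuousLinearMap.star_eq_adjoint]
  exact ContinuousLinearMap.adjoint.norm_map _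

lemma posDef_key_aux (N : ℕ) (X : Matrix (Fin N) (Fin N) ℝ)
    (hXXt : (X * Xᵀ).PosDef) (μ : ℝ)
    (D U M : Matrix (Fin N) (Fin N) ℝ)
    (hD : D = Matrix.diagonal fun i => (Real.sqrt (hXXt.1.eigenvalues i))⁻¹)
    (hU : U = (hXXt.1.eigenvectorUnitary : Matrix (Fin N) (Fin N) ℝ))
    (hM : M = D * Uᵀ * (X + Xᵀ) * U * D)
    (hμmin : (M - μ • (1 : Matrix (Fin N) (Fin N) ℝ)).PosDef) :
    ((X + Xᵀ) - μ • (X * Xᵀ)).PosDef := by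
  subst hU hD hM
  set l := hXXt.1.eigenvalues with hl
  set U : Matrix (Fin N) (Fin N) ℝ := (hXXt.1.eigenvectorUnitary : Matrix (Fin N) (Fin N) ℝ)
    with hU
  set D : Matrix (Fin N) (Fin N) ℝ := diagonal (fun i => (Real.sqrt (l i))⁻¹) with hD
  set M : Matrix (Fin N) (Fin N) ℝ := D * Uᵀ * (X + Xᵀ) * U * D with hM
  have hlp : ∀ i, 0 < l i := hXXt.eigenvalues_pos
  set D' : Matrix (Fin N) (Fin N) ℝ := diagonal (fun i => Real.sqrt (l i)) with hD'
  have hsqrt_ne : ∀ i, Real.sqrt (l i) ≠ 0 := fun i => (Real.sqrt_pos.mpr (hlp i)).ne'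
  have hDD' : D * D' = 1 := by
    rw [hD, hD', diagonal_mul_diagonal,
      show (fun i => (Real.sqrt (l i))⁻¹ * Real.sqrt (l i)) = fun _ => (1:ℝ) from
        funext fun i => inv_mul_cancel₀ (hsqrt_ne i), diagonal_one]
  have hD'D : D' * D = 1 := by
    rw [hD, hD', diagonal_mul_diagonal,
      show (fun i => Real.sqrt (l i) * (Real.sqrt (l i))⁻¹) = fun _ => (1:ℝ) from
        funext fun i => mul_inv_cancel₀ (hsqrt_ne i), diagonal_one]
  have hD'D' : D' * D' = diagonal l := by
    rw [hD', diagonal_mul_diagonal,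
      show (fun i => Real.sqrt (l i) * Real.sqrt (l i)) = l from
        funext fun i => Real.mul_self_sqrt (hlp i).le]
  have hstar : star U = Uᵀ := by
    rw [star_eq_conjTranspose, conjTranspose_eq_transpose_of_trivial]
  have hUUt : U * Uᵀ = 1 := by
    rw [← hstar]
    exact Matrix.mem_unitaryGroup_iff.mp (hXXt.1.eigenvectorUnitary).2
  have hUtU : Uᵀ * U = 1 := by
    rw [← hstar]
    exact Matrix.mem_unitaryGroup_iff'.mp (hXXt.1.eigenvectorUnitary).2
  have hSpec : U * diagonal l * Uᵀ = X * Xᵀ := by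
    conv_rhs => rw [hXXt.1.spectral_theorem]
    rw [Unitary.conjStarAlgAut_apply, ← hU, hstar]
    rfl
  have cancel : ∀ {P Q : Matrix (Fin N) (Fin N) ℝ}, P * Q = 1 →
      ∀ A : Matrix (Fin N) (Fin N) ℝ, P * (Q * A) = A := by
    intro P Q h A; rw [← Matrix.mul_assoc, h, Matrix.one_mul]
  have hEM : (U * D') * M * (D' * Uᵀ) = X + Xᵀ := by
    rw [hM]
    simp only [Matrix.mul_assoc, cancel hD'D, cancel hDD', cancel hUtU, cancel hUUt,
      hUUt, hDD', hD'D, hUtU, Matrix.mul_one]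
  have hEE : (U * D') * (D' * Uᵀ) = X * Xᵀ := by
    rw [Matrix.mul_assoc, ← Matrix.mul_assoc D' D' Uᵀ, hD'D', ← Matrix.mul_assoc, hSpec]
  have h1 : (D' * Uᵀ) * (U * D) = 1 := by
    rw [Matrix.mul_assoc, cancel hUtU, hD'D]
  have h2 : (U * D) * (D' * Uᵀ) = 1 := by
    rw [Matrix.mul_assoc, cancel hDD', hUUt]
  have hE : IsUnit (D' * Uᵀ) := ⟨⟨D' * Uᵀ, U * D, h1, h2⟩, rfl⟩
  have hconj := posDef_conj_aux hμmin hE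
  have hEH : (D' * Uᵀ)ᴴ = U * D' := by
    rw [conjTranspose_mul, conjTranspose_eq_transpose_of_trivial,
      conjTranspose_eq_transpose_of_trivial, transpose_transpose, hD',
      diagonal_transpose]
  have hG : (D' * Uᵀ)ᴴ * (M - μ • (1 : Matrix (Fin N) (Fin N) ℝ)) * (D' * Uᵀ)
      = (X + Xᵀ) - μ • (X * Xᵀ) := by
    rw [hEH, Matrix.mul_sub, Matrix.sub_mul, Matrix.mul_smul, Matrix.mul_one,
      Matrix.smul_mul, hEE, hEM]
  rwa [hG] at hconj

end Aux2

/-- Stability of incremental rules on multiphase feeders: if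
`0 < μ < λ_min(Λ^{-1/2}Uᵀ(X+Xᵀ)UΛ^{-1/2})` (expressed as positive definiteness of
`M − μI`, where `XXᵀ = UΛUᵀ` is the eigendecomposition), then `‖I − μX‖₂ < 1`. -/
theorem multiphase_stability (N : ℕ) (X : Matrix (Fin N) (Fin N) ℝ)
    (hXXt : (X * Xᵀ).PosDef) (μ : ℝ) (hμ : 0 < μ)
    (D U M : Matrix (Fin N) (Fin N) ℝ)
    (hD : D = Matrix.diagonal fun i => (Real.sqrt (hXXt.1.eigenvalues i))⁻¹)
    (hU : U = (hXXt.1.eigenvectorUnitary : Matrix (Fin N) (Fin N) ℝ))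
    (hM : M = D * Uᵀ * (X + Xᵀ) * U * D)
    (hμmin : (M - μ • (1 : Matrix (Fin N) (Fin N) ℝ)).PosDef) :
    specNorm (1 - μ • X) < 1 := by
  have hGpd : ((X + Xᵀ) - μ • (X * Xᵀ)).PosDef :=
    posDef_key_aux N X hXXt μ D U M hD hU hM hμmin
  have hsm := posDef_smul_aux hGpd hμ
  have heq : μ • ((X + Xᵀ) - μ • (X * Xᵀ))
      = (1 : Matrix (Fin N) (Fin N) ℝ) - ((1 - μ • X)ᵀ)ᵀ * (1 - μ • X)ᵀ := by
    rw [transpose_transpose, transpose_sub, transpose_one, transpose_smul]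
    simp only [Matrix.sub_mul, Matrix.mul_sub, Matrix.one_mul, Matrix.mul_one,
      Matrix.smul_mul, Matrix.mul_smul, smul_smul, smul_sub, smul_add]
    module
  have hP : ((1 : Matrix (Fin N) (Fin N) ℝ) - ((1 - μ • X)ᵀ)ᵀ * (1 - μ • X)ᵀ).PosDef :=
    heq ▸ hsm
  have := specNorm_lt_one_aux hP
  rwa [specNorm_transpose_aux] at this
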